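/- Let B be an F-algebra and let f(x_1,...,x_d) be a multihomogeneous polynomial in the free nonassociative algebra. If every multihomogeneous (in x_1,...,x_d) component of f(1+x_1, ..., 1+x_d), computed in the free nonassociative algebra with adjoined unit F{X}^♯, is an identity of B, then f is an identity of the unitization B^♯. -/

import Mathlib

/-! Auxiliary general definitions: free non-unital non-associative algebra machinery,
codimensions, the algebras `A(m,w)`, infinite binary words, and the functions `Φ`. -/

open Finsupp Filter

/-- The free non-unital non-associative algebra on countably many generators `x₀, x₁, …`. -/
abbrev FreeNA (F : Type*) [Field F] : Type _ := FreeNonUnitalNonAssocAlgebra F ℕ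

variable (F : Type*) [Field F]

/-- Multiset of the variables (with multiplicities) occurring in a non-associative monomial. -/
def varsM : FreeMagma ℕ → Multiset ℕ
  | FreeMagma.of i => {i}
  | FreeMagma.mul x y => varsM x + varsM y

/-- The monomial of the free algebra corresponding to a magma word. -/
noncomputable def wordEmb : FreeMagma ℕ →ₙ* FreeNA F :=
  FreeMagma.lift (FreeNonUnitalNonAssocAlgebra.of F)

variable (A : Type*) [NonUnitalNonAssocSemiring A] [Module F A]
  [IsScalarTower F A A] [SMulCommClass F A A]

/-- Evaluation of polynomials of the free algebra in `A`, at the substitution `φ`. -/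
noncomputable def evalHom (φ : ℕ → A) : FreeNA F →ₙₐ[F] A :=
  FreeNonUnitalNonAssocAlgebra.lift F φ

/-- `f` is a polynomial identity of `A`. -/
def IsIdentityOf (f : FreeNA F) : Prop := ∀ φ : ℕ → A, evalHom F A φ f = 0

/-- The space of polynomial identities of `A`. -/
noncomputable def IdS : Submodule F (FreeNA F) where
  carrier := {f | IsIdentityOf F A f}
  add_mem' := fun hf hg φ => by rw [map_add, hf φ, hg φ, add_zero]
  zero_mem' := fun φ => map_zero _
  smul_mem' := fun c f hf φ => by rw [map_smul, hf φ, smul_zero]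

/-- The space `P_n` of multilinear polynomials in the first `n` variables. -/
noncomputable def Pn (n : ℕ) : Submodule F (FreeNA F) :=
  Submodule.span F {x | ∃ u : FreeMagma ℕ, varsM u = (Finset.range n).val ∧ x = wordEmb F u}

/-- The `n`-th codimension `c_n(A) = dim Pₙ/(Pₙ ∩ Id(A))`, computed as the dimension of the
image of `Pₙ` in the quotient of the free algebra by the identities of `A`. -/
noncomputable def codim (n : ℕ) : ℕ :=
  Module.finrank F ((Pn F n).map (IdS F A).mkQ)

/-- The space `W_n^{(d)}` of polynomials homogeneous of total degree `n` in `x_1, …, x_d`. -/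
noncomputable def Wnd (n d : ℕ) : Submodule F (FreeNA F) :=
  Submodule.span F {x | ∃ u : FreeMagma ℕ,
    Multiset.card (varsM u) = n ∧ (∀ v ∈ varsM u, v < d) ∧ x = wordEmb F u}

/-- `dim W_n^{(d)}(A)`. -/
noncomputable def dimW (n d : ℕ) : ℕ :=
  Module.finrank F ((Wnd F n d).map (IdS F A).mkQ)

/- The unitization of a non-unital `F`-algebra is again an `F`-algebra. -/

variable {F A} in
instance : IsScalarTower F (Unitization F A) (Unitization F A) := ⟨fun r x y => by
  show (r • x) * y = r • (x * y)
  ext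
  · simp only [Unitization.fst_mul, Unitization.fst_smul, smul_eq_mul, mul_assoc]
  · simp only [Unitization.snd_mul, Unitization.snd_smul, Unitization.fst_smul, smul_eq_mul,
      smul_add, smul_mul_assoc, mul_smul]
    rw [smul_comm y.fst r]⟩

variable {F A} in
instance : SMulCommClass F (Unitization F A) (Unitization F A) := ⟨fun r x y => by
  show r • (x * y) = x * (r • y)
  ext
  · simp only [Unitization.fst_mul, Unitization.fst_smul, smul_eq_mul]
    ring
  · simp only [Unitization.snd_mul, Unitization.snd_smul, Unitization.fst_smul, smul_eq_mul,
      smul_add, mul_smul_comm, mul_smul]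
    rw [smul_comm x.fst r]⟩


/-- The multihomogeneous component of multidegree `S` (a multiset of variables) of a polynomial
in the free non-unital non-associative algebra. -/
noncomputable def mcomp (F : Type) [Field F] (S : Multiset ℕ) (f : FreeNA F) : FreeNA F :=
  letI : DecidablePred (fun u : FreeMagma ℕ => varsM u = S) := Classical.decPred _
  MonoidAlgebra.ofCoeff (Finsupp.filter (fun u : FreeMagma ℕ => varsM u = S)
    (show FreeMagma ℕ →₀ F from f.coeff) : FreeMagma ℕ →₀ F)

/-- The substitution `x_i ↦ 1 + x_i`, from the free non-unital non-associative algebra `F{X}`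
to the free non-associative algebra with adjoined unit `F{X}^♯`. -/
noncomputable def substOne (F : Type) [Field F] : FreeNA F →ₙₐ[F] Unitization F (FreeNA F) :=
  FreeNonUnitalNonAssocAlgebra.lift F
    (fun i : ℕ => 1 + Unitization.inr (FreeNonUnitalNonAssocAlgebra.of F i))

section Aux

variable {F : Type} [Field F]

/-- Product of the scalars `c i` over a multiset of indices. -/
def kap (c : ℕ → F) (T : Multiset ℕ) : F := (T.map c).prod

lemma kap_zero (c : ℕ → F) : kap c 0 = 1 := rfl

lemma kap_add (c : ℕ → F) (A B : Multiset ℕ) : kap c (A + B) = kap c A * kap c B := by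
  simp [kap]

lemma wordEmb_eq_single (u : FreeMagma ℕ) :
    wordEmb F u = MonoidAlgebra.single u (1 : F) := by
  induction u with
  | ih1 i => rfl
  | ih2 a b iha ihb =>
      show wordEmb F (a * b) = _
      rw [map_mul, iha, ihb]
      exact (MonoidAlgebra.single_mul_single _ _ _ _).trans (by rw [one_mul])

lemma freeNA_mul_apply_mul (g h : FreeNA F) (a b : FreeMagma ℕ) :
    (g * h).coeff (FreeMagma.mul a b) = g.coeff a * h.coeff b := by
  classical
  have hs : ∀ {p : FreeMagma ℕ × FreeMagma ℕ},
      p ∈ ({(a, b)} : Finset (FreeMagma ℕ × FreeMagma ℕ)) ↔ p.1 * p.2 = FreeMagma.mul a b := by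
    rintro ⟨x, y⟩
    constructor
    · intro hp
      rw [Finset.mem_singleton] at hp
      cases hp; rfl
    · intro hp
      have hp' : FreeMagma.mul x y = FreeMagma.mul a b := hp
      injection hp' with h1 h2
      subst h1; subst h2
      exact Finset.mem_singleton_self _
  rw [MonoidAlgebra.mul_apply_antidiagonal g h _ _ hs, Finset.sum_singleton]

lemma freeNA_mul_apply_of (g h : FreeNA F) (i : ℕ) :
    (g * h).coeff (FreeMagma.of i) = 0 := by
  classical
  have hs : ∀ {p : FreeMagma ℕ × FreeMagma ℕ},
      p ∈ (∅ : Finset (FreeMagma ℕ × FreeMagma ℕ)) ↔ p.1 * p.2 = FreeMagma.of i := by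
    rintro ⟨x, y⟩
    simp only [Finset.notMem_empty, false_iff]
    exact fun hp => by cases (hp : FreeMagma.mul x y = FreeMagma.of i)
  rw [MonoidAlgebra.mul_apply_antidiagonal g h _ _ hs, Finset.sum_empty]

lemma mcomp_apply (S : Multiset ℕ) (g : FreeNA F) (w : FreeMagma ℕ) [Decidable (varsM w = S)] :
    (mcomp F S g).coeff w = if varsM w = S then g.coeff w else 0 := by
  by_cases h : varsM w = S
  · rw [if_pos h]
    exact if_pos h
  · rw [if_neg h]
    exact if_neg h

end Aux

/-- The substitution `x_i ↦ c i + x_i`. -/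
noncomputable def theta (F : Type) [Field F] (c : ℕ → F) :
    FreeNA F →ₙₐ[F] Unitization F (FreeNA F) :=
  FreeNonUnitalNonAssocAlgebra.lift F
    (fun i : ℕ => Unitization.inl (c i) + Unitization.inr (FreeNonUnitalNonAssocAlgebra.of F i))

section Aux2

variable {F : Type} [Field F]

lemma of_eq_single (i : ℕ) :
    (FreeNonUnitalNonAssocAlgebra.of F i) = MonoidAlgebra.single (FreeMagma.of i) (1 : F) := rfl

lemma wordEmb_of (i : ℕ) : wordEmb F (FreeMagma.of i) = FreeNonUnitalNonAssocAlgebra.of F i := rfl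

lemma theta_of (c : ℕ → F) (i : ℕ) :
    theta F c (FreeNonUnitalNonAssocAlgebra.of F i)
      = Unitization.inl (c i) + Unitization.inr (FreeNonUnitalNonAssocAlgebra.of F i) :=
  FreeNonUnitalNonAssocAlgebra.lift_of_apply _ _ _

lemma substOne_of (i : ℕ) :
    substOne F (FreeNonUnitalNonAssocAlgebra.of F i)
      = 1 + Unitization.inr (FreeNonUnitalNonAssocAlgebra.of F i) :=
  FreeNonUnitalNonAssocAlgebra.lift_of_apply _ _ _

lemma main_word (c : ℕ → F) (u : FreeMagma ℕ) :
    (theta F c (wordEmb F u)).fst = kap c (varsM u) ∧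
    (substOne F (wordEmb F u)).fst = 1 ∧
    (∀ w : FreeMagma ℕ, ¬ varsM w ≤ varsM u → (substOne F (wordEmb F u)).snd.coeff w = 0) ∧
    (∀ w : FreeMagma ℕ, (theta F c (wordEmb F u)).snd.coeff w
      = kap c (varsM u - varsM w) * (substOne F (wordEmb F u)).snd.coeff w) := by
  induction u with
  | ih1 i =>
      rw [wordEmb_of, theta_of, substOne_of]
      have hv : varsM (FreeMagma.of i) = ({i} : Multiset ℕ) := rfl
      have hts : (Unitization.inl (c i)
          + Unitization.inr (FreeNonUnitalNonAssocAlgebra.of F i) :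
            Unitization F (FreeNA F)).snd = FreeNonUnitalNonAssocAlgebra.of F i := by
        simp
      have hss : ((1 : Unitization F (FreeNA F))
          + Unitization.inr (FreeNonUnitalNonAssocAlgebra.of F i)).snd
          = FreeNonUnitalNonAssocAlgebra.of F i := by
        simp
      refine ⟨?_, ?_, ?_, ?_⟩
      · simp [hv, kap]
      · simp
      · intro w hw
        rw [hss, of_eq_single, MonoidAlgebra.coeff_single]
        rcases eq_or_ne (FreeMagma.of i) w with h | h
        · rw [← h] at hw
          exact absurd (le_refl _) hw
        · exact Finsupp.single_eq_of_ne' h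
      · intro w
        rw [hts, hss, of_eq_single, MonoidAlgebra.coeff_single]
        rcases eq_or_ne (FreeMagma.of i) w with h | h
        · subst h
          rw [Finsupp.single_eq_same, hv, tsub_self, kap_zero, one_mul]
        · rw [Finsupp.single_eq_of_ne' h, mul_zero]
  | ih2 a b iha ihb =>
      obtain ⟨ta, sa, ca, da⟩ := iha
      obtain ⟨tb, sb, cb, db⟩ := ihb
      have hw : wordEmb F (a * b) = wordEmb F a * wordEmb F b := map_mul _ _ _
      have hv : varsM (a * b) = varsM a + varsM b := rfl
      refine ⟨?_, ?_, ?_, ?_⟩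
      · rw [hw, map_mul, Unitization.fst_mul, ta, tb, hv, kap_add]
      · rw [hw, map_mul, Unitization.fst_mul, sa, sb, one_mul]
      · intro w hw'
        have h1 : ¬ varsM w ≤ varsM a := fun h =>
          hw' (hv ▸ h.trans (Multiset.le_add_right _ _))
        have h2 : ¬ varsM w ≤ varsM b := fun h =>
          hw' (hv ▸ h.trans (Multiset.le_add_left _ _))
        rw [hw, map_mul, Unitization.snd_mul, sa, sb, one_smul, one_smul, MonoidAlgebra.coeff_add, MonoidAlgebra.coeff_add,
          Finsupp.add_apply, Finsupp.add_apply, ca w h1, cb w h2, add_zero, zero_add]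
        cases w with
        | of j => exact freeNA_mul_apply_of _ _ _
        | mul w1 w2 =>
            rw [freeNA_mul_apply_mul]
            by_cases hA : varsM w1 ≤ varsM a
            · by_cases hB : varsM w2 ≤ varsM b
              · exact absurd (hv ▸ add_le_add hA hB) hw'
              · rw [cb w2 hB, mul_zero]
            · rw [ca w1 hA, zero_mul]
      · intro w
        rw [hw, map_mul, map_mul, Unitization.snd_mul, Unitization.snd_mul, ta, tb, sa, sb,
          one_smul, one_smul, MonoidAlgebra.coeff_add, MonoidAlgebra.coeff_add,
          MonoidAlgebra.coeff_add, MonoidAlgebra.coeff_add, Finsupp.add_apply, Finsupp.add_apply,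
          Finsupp.add_apply, Finsupp.add_apply, MonoidAlgebra.coeff_smul, MonoidAlgebra.coeff_smul,
          Finsupp.smul_apply, Finsupp.smul_apply,
          smul_eq_mul, smul_eq_mul, hv]
        have e1 : kap c (varsM a) * (theta F c (wordEmb F b)).snd.coeff w
            = kap c (varsM a + varsM b - varsM w) * (substOne F (wordEmb F b)).snd.coeff w := by
          rw [db w]
          by_cases hq : (substOne F (wordEmb F b)).snd.coeff w = 0
          · rw [hq, mul_zero, mul_zero, mul_zero]
          · have hWb : varsM w ≤ varsM b := by
              by_contra h; exact hq (cb w h)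
            rw [add_tsub_assoc_of_le hWb, kap_add, mul_assoc]
        have e2 : kap c (varsM b) * (theta F c (wordEmb F a)).snd.coeff w
            = kap c (varsM a + varsM b - varsM w) * (substOne F (wordEmb F a)).snd.coeff w := by
          rw [da w]
          by_cases hq : (substOne F (wordEmb F a)).snd.coeff w = 0
          · rw [hq, mul_zero, mul_zero, mul_zero]
          · have hWa : varsM w ≤ varsM a := by
              by_contra h; exact hq (ca w h)
            rw [add_comm (varsM a) (varsM b), add_tsub_assoc_of_le hWa, kap_add, mul_assoc]
        have e3 : ((theta F c (wordEmb F a)).snd * (theta F c (wordEmb F b)).snd).coeff w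
            = kap c (varsM a + varsM b - varsM w)
              * ((substOne F (wordEmb F a)).snd * (substOne F (wordEmb F b)).snd).coeff w := by
          cases w with
          | of j => rw [freeNA_mul_apply_of, freeNA_mul_apply_of, mul_zero]
          | mul w1 w2 =>
              rw [freeNA_mul_apply_mul, freeNA_mul_apply_mul, da w1, db w2]
              by_cases hq1 : (substOne F (wordEmb F a)).snd.coeff w1 = 0
              · rw [hq1]; ring
              · by_cases hq2 : (substOne F (wordEmb F b)).snd.coeff w2 = 0
                · rw [hq2]; ring
                · have hWa : varsM w1 ≤ varsM a := by by_contra h; exact hq1 (ca w1 h)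
                  have hWb : varsM w2 ≤ varsM b := by by_contra h; exact hq2 (cb w2 h)
                  have hvv : varsM (FreeMagma.mul w1 w2) = varsM w1 + varsM w2 := rfl
                  rw [hvv, ← tsub_add_tsub_comm hWa hWb, kap_add]
                  ring
        rw [e1, e2, e3, mul_add, mul_add]
end Aux2

section Aux3

variable {F : Type} [Field F]

lemma main_poly (c : ℕ → F) (S : Multiset ℕ) (f : FreeNA F) :
    (∀ u : FreeMagma ℕ, f.coeff u ≠ 0 → varsM u = S) →
    ((theta F c f).fst = kap c S * (substOne F f).fst ∧
     ∀ w : FreeMagma ℕ, (theta F c f).snd.coeff w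
        = kap c (S - varsM w) * (substOne F f).snd.coeff w) := by
  induction f using MonoidAlgebra.induction with
  | zero =>
      intro _
      constructor
      · show (theta F c 0).fst = kap c S * (substOne F 0).fst
        rw [map_zero, map_zero, Unitization.fst_zero, mul_zero]
      · intro w
        show (theta F c 0).snd.coeff w = kap c (S - varsM w) * (substOne F 0).snd.coeff w
        rw [map_zero, map_zero, Unitization.snd_zero, MonoidAlgebra.coeff_zero,
          Finsupp.zero_apply, mul_zero]
  | single_add u r g hu hr ih =>
      intro hsupp
      have hgu : g.coeff u = 0 := Finsupp.notMem_support_iff.mp hu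
      have hu0 : varsM u = S := by
        refine hsupp u ?_
        show (MonoidAlgebra.single u r + g).coeff u ≠ 0
        rw [MonoidAlgebra.coeff_add, Finsupp.add_apply, MonoidAlgebra.coeff_single,
          Finsupp.single_eq_same, hgu, add_zero]
        exact hr
      have hg : ∀ v : FreeMagma ℕ, g.coeff v ≠ 0 → varsM v = S := by
        intro v hv
        refine hsupp v ?_
        show (MonoidAlgebra.single u r + g).coeff v ≠ 0
        have huv : u ≠ v := by rintro rfl; exact hv hgu
        rw [MonoidAlgebra.coeff_add, Finsupp.add_apply, MonoidAlgebra.coeff_single,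
          Finsupp.single_eq_of_ne' huv, zero_add]
        exact hv
      obtain ⟨ihf, ihs⟩ := ih hg
      have hsing : (MonoidAlgebra.single u r : FreeNA F) = r • wordEmb F u := by
        rw [wordEmb_eq_single, MonoidAlgebra.smul_single, smul_eq_mul, mul_one]
      constructor
      · show (theta F c (MonoidAlgebra.single u r + g)).fst
            = kap c S * (substOne F (MonoidAlgebra.single u r + g)).fst
        rw [hsing, map_add, map_add, map_smul, map_smul, Unitization.fst_add,
          Unitization.fst_add, Unitization.fst_smul, Unitization.fst_smul,
          (main_word c u).1, (main_word c u).2.1, ihf, hu0, smul_eq_mul, smul_eq_mul]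
        ring
      · intro w
        show (theta F c (MonoidAlgebra.single u r + g)).snd.coeff w
            = kap c (S - varsM w) * (substOne F (MonoidAlgebra.single u r + g)).snd.coeff w
        rw [hsing, map_add, map_add, map_smul, map_smul, Unitization.snd_add,
          Unitization.snd_add, Unitization.snd_smul, Unitization.snd_smul,
          MonoidAlgebra.coeff_add, MonoidAlgebra.coeff_add,
          Finsupp.add_apply, Finsupp.add_apply, MonoidAlgebra.coeff_smul,
          MonoidAlgebra.coeff_smul, Finsupp.smul_apply, Finsupp.smul_apply,
          (main_word c u).2.2.2 w, ihs w, hu0, smul_eq_mul, smul_eq_mul]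
        ring

lemma identity_of_components (B : Type) [NonUnitalNonAssocRing B] [Module F B]
    [IsScalarTower F B B] [SMulCommClass F B B] (g : FreeNA F)
    (h : ∀ T : Multiset ℕ, IsIdentityOf F B (mcomp F T g)) : IsIdentityOf F B g := by
  classical
  intro ψ
  have hg : g = ∑ T ∈ (show FreeMagma ℕ →₀ F from g.coeff).support.image varsM, mcomp F T g := by
    refine MonoidAlgebra.ext (Finsupp.ext fun w => ?_)
    rw [MonoidAlgebra.coeff_sum, Finsupp.finset_sum_apply]
    simp only [mcomp_apply]
    rw [Finset.sum_ite_eq]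
    split_ifs with hw
    · rfl
    · rcases eq_or_ne (g.coeff w) 0 with h0 | h0
      · first | exact h0 | exact h0.symm
      · exact absurd (Finset.mem_image_of_mem varsM (Finsupp.mem_support_iff.mpr h0)) hw
  calc evalHom F B ψ g
      = evalHom F B ψ (∑ T ∈ (show FreeMagma ℕ →₀ F from g.coeff).support.image varsM,
          mcomp F T g) := by rw [← hg]
    _ = ∑ T ∈ (show FreeMagma ℕ →₀ F from g.coeff).support.image varsM,
          evalHom F B ψ (mcomp F T g) := map_sum _ _ _
    _ = 0 := Finset.sum_eq_zero fun T _ => h T ψ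

end Aux3

/-- The homomorphism `F{X}^♯ → B^♯` induced by a substitution `ψ` into `B`. -/
noncomputable def ell (F : Type) [Field F] (B : Type) [NonUnitalNonAssocRing B] [Module F B]
    [IsScalarTower F B B] [SMulCommClass F B B] (ψ : ℕ → B) :
    Unitization F (FreeNA F) →ₙₐ[F] Unitization F B where
  toFun x := Unitization.inl x.fst + Unitization.inr (evalHom F B ψ x.snd)
  map_smul' r x := by
    refine Unitization.ext ?_ ?_ <;>
      simp [Unitization.fst_smul, Unitization.snd_smul, map_smul]
  map_zero' := by
    refine Unitization.ext ?_ ?_ <;> simp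
  map_add' x y := by
    refine Unitization.ext ?_ ?_ <;>
      simp [Unitization.fst_add, Unitization.snd_add, map_add]
  map_mul' x y := by
    refine Unitization.ext ?_ ?_ <;>
      simp [Unitization.fst_mul, Unitization.snd_mul, map_add, map_smul, map_mul]


/-- Let `B` be an `F`-algebra and `f(x₁,…,x_d)` a multihomogeneous polynomial in the free
non-associative algebra. If every multihomogeneous (in `x₁,…,x_d`) component of
`f(1+x₁,…,1+x_d)` — including its constant component — is an identity of `B`, then `f` is an
identity of the unitization `B^♯`. -/
theorem identity_of_unitization_of_components (F : Type) [Field F] [CharZero F]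
    (B : Type) [NonUnitalNonAssocRing B] [Module F B]
    [IsScalarTower F B B] [SMulCommClass F B B]
    (d : ℕ) (f : FreeNA F) (S : Multiset ℕ)
    (hS : ∀ v ∈ S, v < d) (hhom : mcomp F S f = f)
    (hconst : (substOne F f).fst = 0)
    (hcomp : ∀ S' : Multiset ℕ, IsIdentityOf F B (mcomp F S' (substOne F f).snd)) :
    IsIdentityOf F (Unitization F B) f := by
  classical
  intro φ
  set c : ℕ → F := fun i => (φ i).fst with hc
  set ψ : ℕ → B := fun i => (φ i).snd with hψ
  -- the evaluation at φ factors through θ followed by ℓ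
  have hev : evalHom F (Unitization F B) φ = (ell F B ψ).comp (theta F c) := by
    refine FreeNonUnitalNonAssocAlgebra.hom_ext F fun i => ?_
    show evalHom F (Unitization F B) φ (FreeNonUnitalNonAssocAlgebra.of F i)
        = ell F B ψ (theta F c (FreeNonUnitalNonAssocAlgebra.of F i))
    rw [theta_of]
    have h1 : evalHom F (Unitization F B) φ (FreeNonUnitalNonAssocAlgebra.of F i) = φ i :=
      FreeNonUnitalNonAssocAlgebra.lift_of_apply _ _ _
    have h2 : ell F B ψ (Unitization.inl (c i)
          + Unitization.inr (FreeNonUnitalNonAssocAlgebra.of F i))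
        = Unitization.inl (c i) + Unitization.inr (ψ i) := by
      show Unitization.inl ((Unitization.inl (c i)
            + (Unitization.inr (FreeNonUnitalNonAssocAlgebra.of F i) :
              Unitization F (FreeNA F))).fst)
          + Unitization.inr (evalHom F B ψ ((Unitization.inl (c i)
            + (Unitization.inr (FreeNonUnitalNonAssocAlgebra.of F i) :
              Unitization F (FreeNA F))).snd)) = _
      rw [Unitization.fst_add, Unitization.snd_add, Unitization.fst_inl,
        Unitization.snd_inl, Unitization.fst_inr, Unitization.snd_inr, add_zero, zero_add]
      congr 1
      exact congrArg _ (FreeNonUnitalNonAssocAlgebra.lift_of_apply _ _ _)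
    rw [h1, h2]
    refine Unitization.ext ?_ ?_
    · rw [Unitization.fst_add, Unitization.fst_inl, Unitization.fst_inr, add_zero, hc]
    · rw [Unitization.snd_add, Unitization.snd_inl, Unitization.snd_inr, zero_add, hψ]
  -- support of f is concentrated in multidegree S
  have hsupp : ∀ u : FreeMagma ℕ, f.coeff u ≠ 0 → varsM u = S := by
    intro u hu
    by_contra h
    apply hu
    have h0 : (mcomp F S f).coeff u = f.coeff u := by rw [hhom]
    rw [mcomp_apply, if_neg h] at h0
    exact h0.symm
  obtain ⟨h1, h2⟩ := main_poly c S f hsupp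
  have hfst : (theta F c f).fst = 0 := by rw [h1, hconst, mul_zero]
  have hcompT : ∀ T : Multiset ℕ, IsIdentityOf F B (mcomp F T ((theta F c f).snd)) := by
    intro T χ
    have hT : mcomp F T ((theta F c f).snd)
        = kap c (S - T) • mcomp F T ((substOne F f).snd) := by
      refine MonoidAlgebra.ext (Finsupp.ext fun w => ?_)
      rw [MonoidAlgebra.coeff_smul, Finsupp.smul_apply, mcomp_apply, mcomp_apply]
      by_cases hw : varsM w = T
      · rw [if_pos hw, if_pos hw, h2 w, hw, smul_eq_mul]
      · rw [if_neg hw, if_neg hw, smul_zero]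
    rw [hT, map_smul, hcomp T χ, smul_zero]
  have hzero : evalHom F B ψ ((theta F c f).snd) = 0 :=
    identity_of_components B _ hcompT ψ
  rw [hev]
  show Unitization.inl ((theta F c f).fst)
      + Unitization.inr (evalHom F B ψ ((theta F c f).snd)) = 0
  rw [hfst, hzero, Unitization.inl_zero, Unitization.inr_zero, add_zero]
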